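/- Concentration of truncated Fourier projections on the circle (the d = 2 case of the spherical harmonic concentration lemma): for every φ > 0 and every ε ∈ (0,1) there exist Φ > 0 and L₀ ∈ ℕ such that for all natural numbers L ≥ L₀, every point θ₀ of the circle ℝ/2πℤ, and every f ∈ L²(ℝ/2πℤ) that vanishes almost everywhere outside the arc {θ : dist(θ,θ₀) < φ/L}, the orthogonal projection P_L f of f onto the span of {e^{inθ} : n ∈ ℤ, |n| ≤ L} satisfies ∫_{dist(θ,θ₀) ≥ Φ/L} |P_L f(θ)|² dθ ≤ ε · ‖f‖²_{L²(ℝ/2πℤ)}. -/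

import Mathlib

open MeasureTheory Filter

instance : Fact (0 < 2 * Real.pi) := ⟨Real.two_pi_pos⟩

/-- Orthogonal projection onto trigonometric polynomials of degree at most `L`
on the circle `ℝ/2πℤ`, expressed pointwise via Fourier coefficients. -/
noncomputable def fourierProj (L : ℕ) (f : AddCircle (2 * Real.pi) → ℂ)
    (θ : AddCircle (2 * Real.pi)) : ℂ :=
  ∑ n ∈ Finset.Icc (-(L : ℤ)) (L : ℤ), fourierCoeff f n • fourier n θ

section Aux

open Real Set

lemma geom_bound (L : ℕ) (z : ℂ) (hz : ‖z‖ = 1) (h1 : z ≠ 1) :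
    ‖∑ n ∈ Finset.Icc (-(L : ℤ)) (L : ℤ), z ^ n‖ ≤ 2 / ‖z - 1‖ := by
  have hz0 : z ≠ 0 := by intro h; rw [h] at hz; simp at hz
  have hre : ∑ n ∈ Finset.Icc (-(L : ℤ)) (L : ℤ), z ^ n
      = z ^ (-(L : ℤ)) * ∑ k ∈ Finset.range (2 * L + 1), z ^ k := by
    rw [Finset.mul_sum]
    refine Finset.sum_nbij' (fun n => (n + L).toNat) (fun k => (k : ℤ) - L) ?_ ?_ ?_ ?_ ?_
    · intro n hn
      simp only [Finset.mem_Icc] at hn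
      simp only [Finset.mem_range]
      omega
    · intro k hk
      simp only [Finset.mem_range] at hk
      simp only [Finset.mem_Icc]
      omega
    · intro n hn
      simp only [Finset.mem_Icc] at hn
      simp only [Int.toNat_of_nonneg (by omega : (0:ℤ) ≤ n + L)]
      omega
    · intro k hk
      simp only [Finset.mem_range] at hk
      show ((k : ℤ) - L + L).toNat = k
      omega
    · intro n hn
      simp only [Finset.mem_Icc] at hn
      rw [← zpow_natCast z ((n + L).toNat), Int.toNat_of_nonneg (by omega), ← zpow_add₀ hz0]
      ring_nf
  rw [hre, geom_sum_eq h1]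
  rw [norm_mul, norm_zpow, hz, one_zpow, one_mul, norm_div]
  have h2 : ‖z ^ (2 * L + 1) - 1‖ ≤ 2 := by
    calc ‖z ^ (2 * L + 1) - 1‖ ≤ ‖z ^ (2 * L + 1)‖ + ‖(1 : ℂ)‖ := norm_sub_le _ _
      _ = 2 := by rw [norm_pow, hz]; norm_num
  gcongr
lemma norm_exp_mul_I_sub_one (t : ℝ) :
    ‖Complex.exp (t * Complex.I) - 1‖ = 2 * |Real.sin (t / 2)| := by
  have h : Complex.exp (↑t * Complex.I) - 1
      = ↑(Real.cos t - 1) + ↑(Real.sin t) * Complex.I := by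
    rw [Complex.exp_mul_I]
    push_cast
    ring
  rw [h, Complex.norm_def, Complex.normSq_add_mul_I]
  have h2 : Real.sin (t/2) ^ 2 = 1/2 - Real.cos (2*(t/2))/2 := Real.sin_sq_eq_half_sub (t/2)
  rw [show 2*(t/2) = t by ring] at h2
  have h1 := Real.sin_sq_add_cos_sq t
  have : (Real.cos t - 1)^2 + Real.sin t^2 = (2*|Real.sin (t/2)|)^2 := by
    rw [mul_pow, _root_.sq_abs]
    nlinarith
  rw [this, Real.sqrt_sq (by positivity)]
lemma fourier_eq_exp_zpow (n : ℤ) (x : ℝ) :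
    fourier n (x : AddCircle (2 * π)) = Complex.exp (x * Complex.I) ^ n := by
  rw [fourier_coe_apply, ← Complex.exp_int_mul]
  congr 1
  have hπ : (π : ℂ) ≠ 0 := Complex.ofReal_ne_zero.mpr Real.pi_ne_zero
  push_cast
  field_simp
lemma kernel_bound (L : ℕ) (θ η : AddCircle (2 * π)) (h : 0 < dist θ η) :
    ‖∑ n ∈ Finset.Icc (-(L : ℤ)) (L : ℤ), fourier n θ * fourier (-n) η‖
      ≤ π / dist θ η := by
  induction θ using QuotientAddGroup.induction_on with | H x => ?_
  induction η using QuotientAddGroup.induction_on with | H y => ?_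
  set t : ℝ := x - y with ht
  set k : ℤ := round ((2 * π)⁻¹ * t) with hk
  set d : ℝ := t - k * (2 * π) with hd
  have hdist : dist (↑x : AddCircle (2 * π)) ↑y = |d| := by
    rw [dist_eq_norm, ← QuotientAddGroup.mk_sub, AddCircle.norm_eq]
  have hdle : |d| ≤ π := by
    have h1 := abs_sub_round ((2 * π)⁻¹ * t)
    have h2 : d = (2 * π) * ((2 * π)⁻¹ * t - k) := by
      field_simp [hd]
      ring
    rw [h2, abs_mul, abs_of_pos Real.two_pi_pos]
    nlinarith [Real.pi_pos]
  set z : ℂ := Complex.exp (d * Complex.I) with hz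
  have hterm : ∀ n : ℤ, fourier n (↑x : AddCircle (2 * π)) * fourier (-n) (↑y : AddCircle (2 * π)) = z ^ n := by
    intro n
    rw [fourier_eq_exp_zpow, fourier_eq_exp_zpow, zpow_neg, ← inv_zpow, ← mul_zpow,
      ← Complex.exp_neg, ← Complex.exp_add]
    congr 1
    have : (↑x * Complex.I + -(↑y * Complex.I)) = (↑t * Complex.I) := by
      rw [ht]; push_cast; ring
    rw [this, show (↑t * Complex.I) = ↑d * Complex.I + ↑(k : ℤ) * (2 * ↑π * Complex.I) by
      rw [hd]; push_cast; ring]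
    rw [Complex.exp_add, Complex.exp_int_mul_two_pi_mul_I, mul_one]
  have hznorm : ‖z‖ = 1 := by
    rw [hz, Complex.norm_exp_ofReal_mul_I]
  have hlow : 2 / π * |d| ≤ ‖z - 1‖ := by
    rw [hz, norm_exp_mul_I_sub_one]
    have habs : |Real.sin (d / 2)| = Real.sin (|d| / 2) := by
      rcases le_or_gt 0 d with hd0 | hd0
      · rw [abs_of_nonneg hd0, abs_of_nonneg]
        exact Real.sin_nonneg_of_nonneg_of_le_pi (by linarith) (by
          rw [abs_of_nonneg hd0] at hdle; linarith [Real.pi_pos])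
      · rw [abs_of_neg hd0, abs_of_nonpos, ← Real.sin_neg]
        · ring_nf
        · apply Real.sin_nonpos_of_nonpos_of_neg_pi_le (by linarith)
          rw [abs_of_neg hd0] at hdle; linarith
    rw [habs]
    have := Real.mul_le_sin (x := |d| / 2) (by positivity) (by linarith)
    linarith
  have hdpos : 0 < |d| := by rw [hdist] at h; exact h
  have hz1 : z ≠ 1 := by
    intro hcon
    rw [hcon] at hlow
    simp only [sub_self, norm_zero] at hlow
    have : 0 < 2 / π * |d| := by positivity
    linarith
  calc ‖∑ n ∈ Finset.Icc (-(L : ℤ)) (L : ℤ),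
        fourier n (↑x : AddCircle (2 * π)) * fourier (-n) (↑y : AddCircle (2 * π))‖
      = ‖∑ n ∈ Finset.Icc (-(L : ℤ)) (L : ℤ), z ^ n‖ := by
        congr 1; exact Finset.sum_congr rfl fun n _ => hterm n
    _ ≤ 2 / ‖z - 1‖ := geom_bound L z hznorm hz1
    _ ≤ 2 / (2 / π * |d|) := by
        apply div_le_div_of_nonneg_left (by norm_num) (by positivity) hlow
    _ = π / |d| := by field_simp
    _ = π / dist (↑x : AddCircle (2 * π)) ↑y := by rw [hdist]
lemma tail_bound (b : ℝ) {c R : ℝ} (hc : 0 ≤ c) (hcR : c < R) :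
    ∫ θ : AddCircle (2 * π), Set.indicator {θ : AddCircle (2 * π) | R ≤ dist θ ↑b}
      (fun θ => ((dist θ (↑b : AddCircle (2 * π)) - c) ^ 2)⁻¹) θ
      ≤ 2 / (R - c) := by
  set F : AddCircle (2 * π) → ℝ := Set.indicator {θ : AddCircle (2 * π) | R ≤ dist θ ↑b}
      (fun θ => ((dist θ (↑b : AddCircle (2 * π)) - c) ^ 2)⁻¹) with hF
  set G : ℝ → ℝ := fun u => if R ≤ |u| then ((|u| - c) ^ 2)⁻¹ else 0 with hG
  have hRpos : 0 < R := lt_of_le_of_lt hc hcR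
  -- basic properties of G
  have hGnonneg : ∀ u, 0 ≤ G u := by
    intro u; rw [hG]; dsimp only; split
    · positivity
    · exact le_rfl
  have hGmeas : Measurable G := by
    apply Measurable.ite
    · exact measurableSet_le measurable_const continuous_abs.measurable
    · exact ((continuous_abs.measurable.sub measurable_const).pow_const 2).inv
    · exact measurable_const
  have hGbd : ∀ u, ‖G u‖ ≤ ((R - c) ^ 2)⁻¹ := by
    intro u
    rw [Real.norm_eq_abs, abs_of_nonneg (hGnonneg u), hG]
    dsimp only; split
    · next h =>
      apply inv_anti₀ (by nlinarith)
      nlinarith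
    · positivity
  have hGint : ∀ a a' : ℝ, IntervalIntegrable G volume a a' := by
    intro a a'
    rw [intervalIntegrable_iff]
    refine Integrable.mono' (integrableOn_const (hs := measure_Ioc_lt_top.ne) (C := ((R - c) ^ 2)⁻¹))
      hGmeas.aestronglyMeasurable (Filter.Eventually.of_forall fun u => hGbd u)
  have heven : ∀ u, G (-u) = G u := by intro u; simp [hG, abs_neg]
  -- pass to the real line
  rw [← AddCircle.integral_preimage (2 * π) (b - π) F,
    show b - π + 2 * π = b + π by ring,
    ← intervalIntegral.integral_of_le (by linarith [Real.pi_pos] : b - π ≤ b + π)]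
  have hcongr : Set.EqOn (fun x : ℝ => F ↑x) (fun x : ℝ => G (x - b))
      (Set.uIcc (b - π) (b + π)) := by
    intro x hx
    rw [Set.uIcc_of_le (by linarith [Real.pi_pos] : b - π ≤ b + π)] at hx
    have habs : |x - b| ≤ π := by
      rw [abs_le]; constructor <;> [linarith [hx.1]; linarith [hx.2]]
    have hdist : dist (↑x : AddCircle (2 * π)) ↑b = |x - b| := by
      rw [dist_eq_norm, ← QuotientAddGroup.mk_sub]
      refine (AddCircle.norm_coe_eq_abs_iff (2 * π) (by positivity)).mpr ?_
      rw [abs_of_pos Real.two_pi_pos]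
      linarith
    simp only [hF, hG, Set.indicator_apply, Set.mem_setOf_eq, hdist]
  rw [intervalIntegral.integral_congr hcongr,
    intervalIntegral.integral_comp_sub_right G b,
    show b - π - b = -π by ring, show b + π - b = π by ring]
  -- split [-π, π] at 0 and use symmetry
  have hsplit : ∫ u in (-π)..π, G u = (∫ u in (-π)..(0:ℝ), G u) + ∫ u in (0:ℝ)..π, G u :=
    (intervalIntegral.integral_add_adjacent_intervals (hGint _ _) (hGint _ _)).symm
  have hsym : ∫ u in (-π)..(0:ℝ), G u = ∫ u in (0:ℝ)..π, G u := by
    have h := intervalIntegral.integral_comp_neg (a := (0:ℝ)) (b := π) G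
    rw [neg_zero] at h
    rw [← h]
    simp_rw [heven]
  have hhalf : ∫ u in (0:ℝ)..π, G u ≤ 1 / (R - c) := by
    by_cases hRπ : R ≤ π
    · rw [← intervalIntegral.integral_add_adjacent_intervals (hGint 0 R) (hGint R π)]
      have hzero : ∫ u in (0:ℝ)..R, G u = 0 := by
        have h1 : ∀ᵐ u : ℝ, u ≠ R := by
          rw [MeasureTheory.ae_iff]
          simp only [not_not, Set.setOf_eq_eq_singleton]
          exact Real.volume_singleton
        have hae : ∀ᵐ u : ℝ, u ∈ Set.uIoc (0:ℝ) R → G u = (fun _ : ℝ => (0:ℝ)) u := by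
          filter_upwards [h1] with u hu hmem
          rw [Set.uIoc_of_le hRpos.le] at hmem
          have : |u| < R := by
            rw [abs_of_pos hmem.1]
            exact lt_of_le_of_ne hmem.2 hu
          simp [hG, not_le.mpr this]
        rw [intervalIntegral.integral_congr_ae hae, intervalIntegral.integral_zero]
      have heq : ∫ u in R..π, G u = ∫ u in R..π, ((u - c) ^ 2)⁻¹ := by
        apply intervalIntegral.integral_congr
        intro u hu
        rw [Set.uIcc_of_le hRπ] at hu
        have h1 : R ≤ u := hu.1
        have h2 : |u| = u := abs_of_pos (lt_of_lt_of_le hRpos h1)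
        simp [hG, h2, h1]
      have hval : ∫ u in R..π, ((u - c) ^ 2)⁻¹ = (R - c)⁻¹ - (π - c)⁻¹ := by
        have hz : (fun u : ℝ => ((u - c) ^ 2)⁻¹) = fun u : ℝ => (u - c) ^ (-2 : ℤ) := by
          funext u
          rw [zpow_neg, show ((2:ℤ)) = ((2:ℕ):ℤ) by norm_num, zpow_natCast]
        rw [hz, intervalIntegral.integral_comp_sub_right (fun x : ℝ => x ^ (-2 : ℤ)) c]
        have hnm : (0:ℝ) ∉ Set.uIcc (R - c) (π - c) := by
          rw [Set.uIcc_of_le (by linarith)]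
          simp only [Set.mem_Icc, not_and]
          intro h; linarith
        rw [integral_zpow (Or.inr ⟨by norm_num, hnm⟩)]
        norm_num
        ring
      rw [hzero, heq, hval, zero_add, one_div]
      have : 0 ≤ (π - c)⁻¹ := by
        apply inv_nonneg.mpr; linarith
      linarith
    · push_neg at hRπ
      have hzero : ∫ u in (0:ℝ)..π, G u = 0 := by
        have heqz : Set.EqOn G (fun _ : ℝ => (0:ℝ)) (Set.uIcc (0:ℝ) π) := by
          intro u hu
          rw [Set.uIcc_of_le Real.pi_pos.le] at hu
          have : |u| < R := by rw [abs_of_nonneg hu.1]; linarith [hu.2]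
          simp [hG, not_le.mpr this]
        rw [intervalIntegral.integral_congr heqz, intervalIntegral.integral_zero]
      rw [hzero]
      apply div_nonneg zero_le_one
      linarith
  calc (∫ u in (-π)..π, G u) = (∫ u in (-π)..(0:ℝ), G u) + ∫ u in (0:ℝ)..π, G u := hsplit
    _ = 2 * ∫ u in (0:ℝ)..π, G u := by rw [hsym]; ring
    _ ≤ 2 * (1 / (R - c)) := by linarith [hhalf]
    _ = 2 / (R - c) := by ring
lemma cs_bound {α : Type*} [MeasurableSpace α] (μ : Measure α) [IsFiniteMeasure μ]
    (f : α → ℂ) (hf : MemLp f 2 μ) (S : Set α) :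
    (∫ η in S, ‖f η‖ ∂μ) ^ 2 ≤ (μ S).toReal * ∫ η, ‖f η‖ ^ 2 ∂μ := by
  have hpq : Real.HolderConjugate 2 2 := Real.HolderConjugate.two_two
  have hres : MemLp (fun η => ‖f η‖) (ENNReal.ofReal 2) (μ.restrict S) := by
    rw [ENNReal.ofReal_ofNat]
    exact hf.norm.restrict S
  have hone : MemLp (fun _ : α => (1 : ℝ)) (ENNReal.ofReal 2) (μ.restrict S) := memLp_const 1
  have h := integral_mul_le_Lp_mul_Lq_of_nonneg hpq
    (Filter.Eventually.of_forall fun η => norm_nonneg (f η))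
    (Filter.Eventually.of_forall fun _ => zero_le_one) hres hone
  simp only [mul_one, Real.one_rpow] at h
  have hrpow : ∀ x : ℝ, 0 ≤ x → x ^ (2 : ℝ) = x ^ 2 := fun x hx => by
    rw [← Real.rpow_natCast x 2]; norm_num
  rw [integral_congr_ae (Filter.Eventually.of_forall fun η => hrpow _ (norm_nonneg (f η)))] at h
  rw [integral_const, smul_eq_mul, mul_one, measureReal_restrict_apply_univ, measureReal_def] at h
  set I : ℝ := ∫ η in S, ‖f η‖ ^ 2 ∂μ with hI
  set m : ℝ := (μ S).toReal with hm
  have hI0 : 0 ≤ I := integral_nonneg fun η => by positivity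
  have hm0 : 0 ≤ m := ENNReal.toReal_nonneg
  have hA0 : 0 ≤ ∫ η in S, ‖f η‖ ∂μ := integral_nonneg fun η => norm_nonneg _
  have hsq : (I ^ (1/2 : ℝ) * m ^ (1/2 : ℝ)) ^ 2 = I * m := by
    rw [mul_pow, ← Real.rpow_natCast (I ^ (1/2:ℝ)) 2, ← Real.rpow_natCast (m ^ (1/2:ℝ)) 2,
      ← Real.rpow_mul hI0, ← Real.rpow_mul hm0]
    norm_num
  have h2 : (∫ η in S, ‖f η‖ ∂μ) ^ 2 ≤ I * m := by
    rw [← hsq]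
    exact pow_le_pow_left₀ hA0 h 2
  have h3 : I ≤ ∫ η, ‖f η‖ ^ 2 ∂μ := by
    apply setIntegral_le_integral (hf.norm.integrable_sq)
    exact Filter.Eventually.of_forall fun η => by positivity
  calc (∫ η in S, ‖f η‖ ∂μ) ^ 2 ≤ I * m := h2
    _ = m * I := mul_comm _ _
    _ ≤ m * ∫ η, ‖f η‖ ^ 2 ∂μ := mul_le_mul_of_nonneg_left h3 hm0
lemma fourierProj_repr (L : ℕ) (f : AddCircle (2 * π) → ℂ)
    (hf : Integrable f AddCircle.haarAddCircle) (θ : AddCircle (2 * π)) :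
    fourierProj L f θ = ∫ η, (∑ n ∈ Finset.Icc (-(L : ℤ)) (L : ℤ),
        fourier n θ * fourier (-n) η) * f η ∂AddCircle.haarAddCircle := by
  have hnorm : ∀ (n : ℤ) (x : AddCircle (2 * π)), ‖fourier n x‖ = 1 := fun n x =>
    Circle.norm_coe _
  have hint : ∀ n : ℤ, Integrable (fun η => fourier n θ * (fourier (-n) η * f η))
      AddCircle.haarAddCircle := by
    intro n
    apply Integrable.const_mul
    exact hf.bdd_mul (c := 1) (map_continuous (fourier (-n))).aestronglyMeasurable
      (Filter.Eventually.of_forall fun x => le_of_eq (hnorm _ _))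
  unfold fourierProj
  have h1 : ∀ n ∈ Finset.Icc (-(L : ℤ)) (L : ℤ), fourierCoeff f n • fourier n θ
      = ∫ η, fourier n θ * (fourier (-n) η * f η) ∂AddCircle.haarAddCircle := by
    intro n _
    calc fourierCoeff f n • fourier n θ = fourier n θ * fourierCoeff f n := by
          rw [smul_eq_mul, mul_comm]
      _ = fourier n θ * ∫ η, fourier (-n) η * f η ∂AddCircle.haarAddCircle := by
          simp only [fourierCoeff, smul_eq_mul]
      _ = ∫ η, fourier n θ * (fourier (-n) η * f η) ∂AddCircle.haarAddCircle :=
          (integral_const_mul _ _).symm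
  rw [Finset.sum_congr rfl h1, ← integral_finset_sum _ fun n _ => hint n]
  apply integral_congr_ae
  apply Filter.Eventually.of_forall
  intro η
  show _ = (∑ n ∈ Finset.Icc (-(L : ℤ)) (L : ℤ), fourier n θ * fourier (-n) η) * f η
  rw [Finset.sum_mul]
  exact Finset.sum_congr rfl fun n _ => (mul_assoc _ _ _).symm
end Aux

theorem fourierProj_concentration :
    ∀ φ > (0:ℝ), ∀ ε ∈ Set.Ioo (0:ℝ) 1, ∃ Φ > (0:ℝ), ∃ L₀ : ℕ,
      ∀ L : ℕ, L₀ ≤ L → ∀ θ₀ : AddCircle (2 * Real.pi),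
        ∀ f : AddCircle (2 * Real.pi) → ℂ, MemLp f 2 volume →
          (∀ᵐ θ, φ / L ≤ dist θ θ₀ → f θ = 0) →
          ∫ θ in {θ : AddCircle (2 * Real.pi) | Φ / L ≤ dist θ θ₀},
              ‖fourierProj L f θ‖ ^ 2
            ≤ ε * ∫ θ : AddCircle (2 * Real.pi), ‖f θ‖ ^ 2 := by
  intro φ hφ ε hε
  obtain ⟨hε0, hε1⟩ := hε
  refine ⟨φ + φ / ε, by positivity, 1, ?_⟩
  intro L hL θ₀ f hf hvan
  induction θ₀ using QuotientAddGroup.induction_on with | H b => ?_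
  have h2π : (0:ℝ) < 2 * Real.pi := Real.two_pi_pos
  have hL1 : (1:ℝ) ≤ (L:ℝ) := by exact_mod_cast hL
  have hLpos : (0:ℝ) < L := by linarith
  set μ : Measure (AddCircle (2 * Real.pi)) := AddCircle.haarAddCircle with hμ
  set c := φ / (L:ℝ) with hc
  set R := (φ + φ / ε) / (L:ℝ) with hR
  have hc0 : 0 ≤ c := by positivity
  have hRc : R - c = (φ / ε) / L := by rw [hc, hR]; field_simp; ring
  have hcR : c < R := by
    have h1 : 0 < (φ / ε) / (L:ℝ) := by positivity
    linarith
  have hR0 : 0 < R := lt_of_le_of_lt hc0 hcR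
  have hvol : (volume : Measure (AddCircle (2 * Real.pi))) = ENNReal.ofReal (2 * Real.pi) • μ :=
    AddCircle.volume_eq_smul_haarAddCircle
  have hne0 : (ENNReal.ofReal (2 * Real.pi)) ≠ 0 := by
    simp only [ne_eq, ENNReal.ofReal_eq_zero, not_le]
    exact h2π
  have hnetop : (ENNReal.ofReal (2 * Real.pi)) ≠ ⊤ := ENNReal.ofReal_ne_top
  have hμvol : μ = (ENNReal.ofReal (2 * Real.pi))⁻¹ • (volume : Measure (AddCircle (2 * Real.pi))) := by
    rw [hvol, smul_smul, ENNReal.inv_mul_cancel hne0 hnetop, one_smul]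
  have hfμ : MemLp f 2 μ := by
    rw [hμvol]
    exact hf.smul_measure (ENNReal.inv_ne_top.mpr hne0)
  have hfint : Integrable f μ := hfμ.integrable one_le_two
  have hvanμ : ∀ᵐ η ∂μ, c ≤ dist η ↑b → f η = 0 := by
    rw [hμvol]
    exact Measure.ae_smul_measure hvan _
  set V := ∫ θ : AddCircle (2 * Real.pi), ‖f θ‖ ^ 2 with hV
  have hV0 : 0 ≤ V := integral_nonneg fun θ => by positivity
  set S : Set (AddCircle (2 * Real.pi)) := Metric.ball (↑b) c with hS
  set A := ∫ η in S, ‖f η‖ ∂μ with hA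
  have hA0 : 0 ≤ A := integral_nonneg fun η => norm_nonneg _
  have hI2 : ∫ η, ‖f η‖ ^ 2 ∂μ = V / (2 * Real.pi) := by
    rw [hV, hvol, integral_smul_measure, ENNReal.toReal_ofReal h2π.le, smul_eq_mul]
    field_simp
  have hμS : (μ S).toReal ≤ φ / (Real.pi * L) := by
    have h1 : μ S ≤ μ (Metric.closedBall (↑b) c) := measure_mono Metric.ball_subset_closedBall
    have h2 : μ (Metric.closedBall (↑b : AddCircle (2 * Real.pi)) c)
        = (ENNReal.ofReal (2 * Real.pi))⁻¹ * volume (Metric.closedBall (↑b : AddCircle (2 * Real.pi)) c) := by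
      rw [hμvol]; simp [Measure.smul_apply]
    rw [AddCircle.volume_closedBall] at h2
    have h3 : μ S ≤ (ENNReal.ofReal (2 * Real.pi))⁻¹ * ENNReal.ofReal (2 * c) := by
      refine le_trans (h2 ▸ h1) ?_
      exact mul_le_mul_right (ENNReal.ofReal_le_ofReal (min_le_right _ _)) _
    calc (μ S).toReal ≤ ((ENNReal.ofReal (2 * Real.pi))⁻¹ * ENNReal.ofReal (2 * c)).toReal :=
          ENNReal.toReal_mono (ENNReal.mul_ne_top (ENNReal.inv_ne_top.mpr hne0) ENNReal.ofReal_ne_top) h3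
      _ = (2 * c) / (2 * Real.pi) := by
          rw [ENNReal.toReal_mul, ENNReal.toReal_inv, ENNReal.toReal_ofReal h2π.le,
            ENNReal.toReal_ofReal (by positivity)]
          ring
      _ = φ / (Real.pi * L) := by rw [hc]; field_simp
  have hA2 : A ^ 2 ≤ (φ / (Real.pi * L)) * (V / (2 * Real.pi)) := by
    have h := cs_bound μ f hfμ S
    rw [hI2] at h
    calc A ^ 2 ≤ (μ S).toReal * (V / (2 * Real.pi)) := h
      _ ≤ (φ / (Real.pi * L)) * (V / (2 * Real.pi)) :=
        mul_le_mul_of_nonneg_right hμS (div_nonneg hV0 (by positivity))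
  -- pointwise bound
  have hpt : ∀ θ : AddCircle (2 * Real.pi), R ≤ dist θ ↑b →
      ‖fourierProj L f θ‖ ≤ Real.pi / (dist θ ↑b - c) * A := by
    intro θ hθ
    have hdc : 0 < dist θ ↑b - c := by linarith
    rw [fourierProj_repr L f hfint θ]
    have hker : ∀ η ∈ S, ‖∑ n ∈ Finset.Icc (-(L : ℤ)) (L : ℤ), fourier n θ * fourier (-n) η‖
        ≤ Real.pi / (dist θ ↑b - c) := by
      intro η hη
      have hηb : dist η ↑b < c := Metric.mem_ball.mp hη
      have h1 : dist θ ↑b - c ≤ dist θ η := by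
        have h3 := dist_triangle θ η ↑b
        linarith
      have h2 : 0 < dist θ η := lt_of_lt_of_le hdc h1
      refine le_trans (kernel_bound L θ η h2) ?_
      gcongr
    have hind : (fun η => (∑ n ∈ Finset.Icc (-(L : ℤ)) (L : ℤ), fourier n θ * fourier (-n) η) * f η)
        =ᵐ[μ] S.indicator (fun η => (∑ n ∈ Finset.Icc (-(L : ℤ)) (L : ℤ), fourier n θ * fourier (-n) η) * f η) := by
      filter_upwards [hvanμ] with η hη
      by_cases hmem : η ∈ S
      · rw [Set.indicator_of_mem hmem]
      · rw [Set.indicator_of_notMem hmem]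
        have hcd : c ≤ dist η ↑b := not_lt.mp (fun h => hmem (Metric.mem_ball.mpr h))
        rw [hη hcd, mul_zero]
    rw [integral_congr_ae hind, integral_indicator Metric.isOpen_ball.measurableSet]
    calc ‖∫ η in S, (∑ n ∈ Finset.Icc (-(L : ℤ)) (L : ℤ), fourier n θ * fourier (-n) η) * f η ∂μ‖
        ≤ ∫ η in S, ‖(∑ n ∈ Finset.Icc (-(L : ℤ)) (L : ℤ), fourier n θ * fourier (-n) η) * f η‖ ∂μ :=
          norm_integral_le_integral_norm _
      _ ≤ ∫ η in S, Real.pi / (dist θ ↑b - c) * ‖f η‖ ∂μ := by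
          apply integral_mono_of_nonneg
          · exact Filter.Eventually.of_forall fun η => norm_nonneg _
          · exact (hfint.norm.restrict (s := S)).const_mul _
          · refine (ae_restrict_iff' Metric.isOpen_ball.measurableSet).mpr ?_
            apply Filter.Eventually.of_forall
            intro η hη
            show ‖_ * f η‖ ≤ _
            rw [norm_mul]
            exact mul_le_mul_of_nonneg_right (hker η hη) (norm_nonneg _)
      _ = Real.pi / (dist θ ↑b - c) * A := by rw [hA]; exact integral_const_mul _ _
  have hpt2 : ∀ θ : AddCircle (2 * Real.pi), R ≤ dist θ ↑b →
      ‖fourierProj L f θ‖ ^ 2 ≤ Real.pi ^ 2 * A ^ 2 * ((dist θ ↑b - c) ^ 2)⁻¹ := by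
    intro θ hθ
    have hdc : 0 < dist θ ↑b - c := by linarith
    calc ‖fourierProj L f θ‖ ^ 2 ≤ (Real.pi / (dist θ ↑b - c) * A) ^ 2 :=
          pow_le_pow_left₀ (norm_nonneg _) (hpt θ hθ) 2
      _ = Real.pi ^ 2 * A ^ 2 * ((dist θ ↑b - c) ^ 2)⁻¹ := by
          field_simp
  -- main estimate
  set bad : Set (AddCircle (2 * Real.pi)) := {θ | R ≤ dist θ ↑b} with hbad
  have hbad_meas : MeasurableSet bad :=
    measurableSet_le measurable_const (continuous_id.dist continuous_const).measurable
  have hhmeas : Measurable (fun θ : AddCircle (2 * Real.pi) => ((dist θ ↑b - c) ^ 2)⁻¹) :=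
    (((continuous_id.dist continuous_const).measurable.sub measurable_const).pow_const 2).inv
  have hind_int : Integrable (bad.indicator fun θ : AddCircle (2 * Real.pi) =>
      ((dist θ ↑b - c) ^ 2)⁻¹) volume := by
    apply Integrable.mono' (integrable_const (((R - c) ^ 2)⁻¹))
    · exact (hhmeas.indicator hbad_meas).aestronglyMeasurable
    · apply Filter.Eventually.of_forall
      intro θ
      rw [Real.norm_eq_abs, Set.indicator_apply]
      split
      · next hmem =>
        have hRd : R ≤ dist θ ↑b := hmem
        rw [abs_of_nonneg (by positivity)]
        apply inv_anti₀ (by nlinarith) (by nlinarith)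
      · rw [abs_zero]
        positivity
  rw [← integral_indicator hbad_meas]
  have hmono : ∀ θ : AddCircle (2 * Real.pi), bad.indicator (fun θ => ‖fourierProj L f θ‖ ^ 2) θ
      ≤ Real.pi ^ 2 * A ^ 2 * bad.indicator (fun θ => ((dist θ ↑b - c) ^ 2)⁻¹) θ := by
    intro θ
    rw [Set.indicator_apply, Set.indicator_apply]
    split
    · next hmem => exact hpt2 θ hmem
    · simp
  have h2Rc : 2 / (R - c) = 2 * L * ε / φ := by
    rw [hRc]
    field_simp
  calc ∫ θ, bad.indicator (fun θ => ‖fourierProj L f θ‖ ^ 2) θ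
      ≤ ∫ θ, Real.pi ^ 2 * A ^ 2 * bad.indicator (fun θ => ((dist θ ↑b - c) ^ 2)⁻¹) θ := by
        apply integral_mono_of_nonneg
        · exact Filter.Eventually.of_forall fun θ =>
            Set.indicator_apply_nonneg (fun _ => by positivity)
        · exact hind_int.const_mul _
        · exact Filter.Eventually.of_forall hmono
    _ = Real.pi ^ 2 * A ^ 2 * ∫ θ, bad.indicator (fun θ => ((dist θ ↑b - c) ^ 2)⁻¹) θ :=
        integral_const_mul _ _
    _ ≤ Real.pi ^ 2 * A ^ 2 * (2 / (R - c)) :=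
        mul_le_mul_of_nonneg_left (tail_bound b hc0 hcR) (by positivity)
    _ ≤ Real.pi ^ 2 * ((φ / (Real.pi * L)) * (V / (2 * Real.pi))) * (2 / (R - c)) := by
        apply mul_le_mul_of_nonneg_right (mul_le_mul_of_nonneg_left hA2 (by positivity))
        rw [h2Rc]
        positivity
    _ = ε * V := by
        rw [h2Rc]
        field_simp
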